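/- Let X : ℝ × ℝ → ℝ³ be the helicoid patch X(u,v) = (-sinh u · sin v, sinh u · cos v, v), let N(u,v) = (X_u × X_v)/‖X_u × X_v‖ be its unit normal (the cross product being nonzero for all (u,v)), and let K(u,v) = -1/cosh⁴u be its Gauss curvature. Then for all (u,v), the quantity (-K(u,v))^{-1/2}·(1 - ⟨N(u,v), (0,0,1)⟩²) equals 1; that is, the second Chern–Ricci function of the helicoid with respect to V = e₃ is identically 0. -/

import Mathlib

/-- The helicoid patch `X(u,v) = (-sinh u · sin v, sinh u · cos v, v)`. -/
noncomputable def helicoidPatch (u v : ℝ) : EuclideanSpace ℝ (Fin 3) :=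
  !₂[-Real.sinh u * Real.sin v, Real.sinh u * Real.cos v, v]

/-- The cross product of two vectors in `ℝ³`. -/
noncomputable def cross3 (a b : EuclideanSpace ℝ (Fin 3)) : EuclideanSpace ℝ (Fin 3) :=
  !₂[a 1 * b 2 - a 2 * b 1, a 2 * b 0 - a 0 * b 2, a 0 * b 1 - a 1 * b 0]

/-- The unit normal of the helicoid patch, `N = (X_u × X_v)/‖X_u × X_v‖`. -/
noncomputable def helicoidNormal (u v : ℝ) : EuclideanSpace ℝ (Fin 3) :=
  ‖cross3 (deriv (fun u' => helicoidPatch u' v) u) (deriv (fun v' => helicoidPatch u v') v)‖⁻¹ •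
    cross3 (deriv (fun u' => helicoidPatch u' v) u) (deriv (fun v' => helicoidPatch u v') v)

lemma helicoid_hasDerivAt_u (u v : ℝ) :
    HasDerivAt (fun u' => helicoidPatch u' v)
      (!₂[-(Real.cosh u * Real.sin v), Real.cosh u * Real.cos v, 0] :
        EuclideanSpace ℝ (Fin 3)) u := by
  have h : HasDerivAt
      (fun u' => (![-Real.sinh u' * Real.sin v, Real.sinh u' * Real.cos v, v] : Fin 3 → ℝ))
      (![-(Real.cosh u * Real.sin v), Real.cosh u * Real.cos v, 0] : Fin 3 → ℝ) u := by
    rw [hasDerivAt_pi]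
    intro i
    fin_cases i
    · simpa using ((Real.hasDerivAt_sinh u).neg.mul_const (Real.sin v))
    · simpa using ((Real.hasDerivAt_sinh u).mul_const (Real.cos v))
    · simpa using (hasDerivAt_const u v)
  exact ((EuclideanSpace.equiv (Fin 3) ℝ).symm.toContinuousLinearMap.hasFDerivAt).comp_hasDerivAt
    u h

lemma helicoid_hasDerivAt_v (u v : ℝ) :
    HasDerivAt (fun v' => helicoidPatch u v')
      (!₂[-(Real.sinh u * Real.cos v), Real.sinh u * -Real.sin v, 1] :
        EuclideanSpace ℝ (Fin 3)) v := by
  have h : HasDerivAt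
      (fun v' => (![-Real.sinh u * Real.sin v', Real.sinh u * Real.cos v', v'] : Fin 3 → ℝ))
      (![-(Real.sinh u * Real.cos v), Real.sinh u * -Real.sin v, 1] : Fin 3 → ℝ) v := by
    rw [hasDerivAt_pi]
    intro i
    fin_cases i
    · simpa [neg_mul, mul_comm] using ((Real.hasDerivAt_sin v).const_mul (-Real.sinh u))
    · simpa using ((Real.hasDerivAt_cos v).const_mul (Real.sinh u))
    · exact hasDerivAt_id v
  exact ((EuclideanSpace.equiv (Fin 3) ℝ).symm.toContinuousLinearMap.hasFDerivAt).comp_hasDerivAt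
    v h

lemma helicoid_cross_eq (u v : ℝ) :
    cross3 (deriv (fun u' => helicoidPatch u' v) u) (deriv (fun v' => helicoidPatch u v') v)
      = !₂[Real.cosh u * Real.cos v, Real.cosh u * Real.sin v, Real.sinh u * Real.cosh u] := by
  rw [(helicoid_hasDerivAt_u u v).deriv, (helicoid_hasDerivAt_v u v).deriv]
  ext i
  fin_cases i <;>
    simp [cross3] <;>
    linear_combination Real.sinh u * Real.cosh u * (Real.sin_sq_add_cos_sq v)

lemma helicoid_cross_norm (u v : ℝ) :
    ‖cross3 (deriv (fun u' => helicoidPatch u' v) u)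
      (deriv (fun v' => helicoidPatch u v') v)‖ = Real.cosh u ^ 2 := by
  rw [helicoid_cross_eq, EuclideanSpace.norm_eq]
  rw [show (∑ i, ‖(!₂[Real.cosh u * Real.cos v, Real.cosh u * Real.sin v,
      Real.sinh u * Real.cosh u]) i‖ ^ 2 : ℝ) = (Real.cosh u ^ 2) ^ 2 by
    simp [Fin.sum_univ_three, sq_abs]
    nlinarith [Real.sin_sq_add_cos_sq v, Real.cosh_sq u]]
  exact Real.sqrt_sq (by positivity)

lemma helicoid_inner (u v : ℝ) :
    (inner ℝ (helicoidNormal u v) (!₂[0, 0, 1] : EuclideanSpace ℝ (Fin 3)) : ℝ)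
      = Real.sinh u / Real.cosh u := by
  have hc : (0 : ℝ) < Real.cosh u := Real.cosh_pos u
  rw [helicoidNormal, real_inner_smul_left, helicoid_cross_norm]
  have h2 : (inner ℝ (cross3 (deriv (fun u' => helicoidPatch u' v) u)
      (deriv (fun v' => helicoidPatch u v') v))
      (!₂[0, 0, 1] : EuclideanSpace ℝ (Fin 3)) : ℝ) = Real.sinh u * Real.cosh u := by
    rw [helicoid_cross_eq]
    simp [PiLp.inner_apply, RCLike.inner_apply, Fin.sum_univ_three]
  rw [h2]
  field_simp

/-- For the helicoid, the cross product `X_u × X_v` is everywhere nonzero and,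
with Gauss curvature `K = -1/cosh⁴u` and unit normal `N`, the quantity
`(-K)^(-1/2)·(1 - ⟨N, e₃⟩²)` is identically `1`; i.e. the second Chern–Ricci function of the
helicoid with respect to `V = e₃` is identically `0`. -/
theorem helicoid_second_chern_ricci_constant
    (K : ℝ → ℝ → ℝ) (hK : ∀ u v : ℝ, K u v = -1 / Real.cosh u ^ 4) :
    ∀ u v : ℝ,
      cross3 (deriv (fun u' => helicoidPatch u' v) u)
          (deriv (fun v' => helicoidPatch u v') v) ≠ 0 ∧
      (-K u v) ^ (-(1 / 2) : ℝ) *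
        (1 - (inner ℝ (helicoidNormal u v) (!₂[0, 0, 1] : EuclideanSpace ℝ (Fin 3)) : ℝ) ^ 2)
      = 1 := by
  intro u v
  have hc : (0 : ℝ) < Real.cosh u := Real.cosh_pos u
  have hc2 : (0 : ℝ) < Real.cosh u ^ 2 := by positivity
  constructor
  · intro h
    have := helicoid_cross_norm u v
    rw [h, norm_zero] at this
    nlinarith
  · have hpow : (-K u v) ^ (-(1 / 2) : ℝ) = Real.cosh u ^ 2 := by
      have e2 : (Real.cosh u ^ 2 : ℝ) ^ (2 : ℝ) = (Real.cosh u ^ 2) ^ 2 := by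
        rw [show (2 : ℝ) = ((2 : ℕ) : ℝ) by norm_num, Real.rpow_natCast]
      have hKval : -K u v = (Real.cosh u ^ 2 : ℝ) ^ (-2 : ℝ) := by
        rw [hK, show (-2 : ℝ) = -(2 : ℝ) by norm_num, Real.rpow_neg hc2.le, e2]
        rw [show ((Real.cosh u ^ 2 : ℝ) ^ 2) = Real.cosh u ^ 4 by ring]
        field_simp
      rw [hKval, ← Real.rpow_mul hc2.le]
      norm_num
    rw [hpow, helicoid_inner]
    have := Real.cosh_sq_sub_sinh_sq u
    field_simp
    exact this
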